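/- Let A = (a_1,…,a_{m1})^T ∈ {0,1}^{m1×n1} be the node-edge incidence matrix of a finite simple bipartite graph with vertex bipartition (R1, R2) of [m1], and let H = (h_1,…,h_{m2})^T ∈ {0,1}^{m2×n1} satisfy: (i) for every l ∈ [m2] there exists i ∈ [m1] with supp(h_l) ⊆ supp(a_i); (ii) for any two distinct rows h_i, h_l with supp(h_i) ∪ supp(h_l) ⊆ supp(a_k) for some k ∈ [m1], one has supp(h_i) ∩ supp(h_l) = ∅; and |supp(h_l)| ≥ 2 for all l ∈ [m2]. For L ⊆ [m2] and R ⊆ [m1] set L(R) := {l ∈ L : ∃ i ∈ R with supp(h_l) ⊆ supp(a_i)}. Then for all I ⊆ [m1] and L ⊆ [m2], the vector (Σ_{i ∈ R1∩I} a_i + Σ_{l ∈ L(R1\I)} h_l − Σ_{l ∈ L(R1∩I)} h_l) − (Σ_{i ∈ R2∩I} a_i + Σ_{l ∈ L(R2\I)} h_l − Σ_{l ∈ L(R2∩I)} h_l) ∈ ℤ^{n1} has all entries in {0, 1, −1}; in other words, the rows of the stacked matrix (A; H) indexed by I and L can be split into two parts such that the sum of the rows in one part minus the sum of the rows in the other part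 is a vector with entries in {0, ±1}. -/

import Mathlib

open scoped Classical

/-- `L(R) = {l ∈ L : ∃ i ∈ R with supp(h_l) ⊆ supp(a_i)}`. -/
noncomputable def LofR {m1 m2 n1 : ℕ} (A : Matrix (Fin m1) (Fin n1) ℤ)
    (H : Matrix (Fin m2) (Fin n1) ℤ)
    (L : Finset (Fin m2)) (R : Finset (Fin m1)) : Finset (Fin m2) :=
  L.filter fun l => ∃ i ∈ R, {j | H l j ≠ 0} ⊆ {j | A i j ≠ 0}

set_option maxHeartbeats 1000000 in
/-- with `A` the node-edge incidence matrix of a finite simple bipartite graph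
with bipartition `(R1, R2)` and `H` satisfying (i), (ii) and `|supp(h_l)| ≥ 2`, for all
`I ⊆ [m1]` and `L ⊆ [m2]` the vector
`(Σ_{i∈R1∩I} a_i + Σ_{l∈L(R1\I)} h_l − Σ_{l∈L(R1∩I)} h_l)
 − (Σ_{i∈R2∩I} a_i + Σ_{l∈L(R2\I)} h_l − Σ_{l∈L(R2∩I)} h_l)`
has all entries in `{0, 1, −1}`. -/
theorem stmt12 (m1 m2 n1 : ℕ)
    (A : Matrix (Fin m1) (Fin n1) ℤ) (H : Matrix (Fin m2) (Fin n1) ℤ)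
    (R1 R2 : Finset (Fin m1))
    (hdisj : Disjoint R1 R2) (hcover : R1 ∪ R2 = Finset.univ)
    (hA01 : ∀ i e, A i e = 0 ∨ A i e = 1)
    (hH01 : ∀ l j, H l j = 0 ∨ H l j = 1)
    (hbip1 : ∀ e, ∃! i, i ∈ R1 ∧ A i e = 1)
    (hbip2 : ∀ e, ∃! i, i ∈ R2 ∧ A i e = 1)
    (hsimple : ∀ e e' : Fin n1, (∀ i, A i e = A i e') → e = e')
    (hi : ∀ l, ∃ i, {j | H l j ≠ 0} ⊆ {j | A i j ≠ 0})
    (hii : ∀ l l', l ≠ l' →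
        (∃ i, {j | H l j ≠ 0} ∪ {j | H l' j ≠ 0} ⊆ {j | A i j ≠ 0}) →
        {j | H l j ≠ 0} ∩ {j | H l' j ≠ 0} = ∅)
    (hsupp2 : ∀ l, 2 ≤ {j | H l j ≠ 0}.ncard)
    (I : Finset (Fin m1)) (L : Finset (Fin m2)) :
    ∀ j : Fin n1,
      (((∑ i ∈ R1 ∩ I, A i j) + (∑ l ∈ LofR A H L (R1 \ I), H l j)
          - ∑ l ∈ LofR A H L (R1 ∩ I), H l j)
        - ((∑ i ∈ R2 ∩ I, A i j) + (∑ l ∈ LofR A H L (R2 \ I), H l j)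
          - ∑ l ∈ LofR A H L (R2 ∩ I), H l j)) ∈ ({0, 1, -1} : Set ℤ) := by
  intro j
  obtain ⟨i1, ⟨hi1R, hi1A⟩, hi1u⟩ := hbip1 j
  obtain ⟨i2, ⟨hi2R, hi2A⟩, hi2u⟩ := hbip2 j
  -- the A-sums
  have sumA : ∀ (R : Finset (Fin m1)) (i0 : Fin m1), i0 ∈ R → A i0 j = 1 →
      (∀ i, i ∈ R → A i j = 1 → i = i0) →
      (∑ i ∈ R ∩ I, A i j) = if i0 ∈ I then 1 else 0 := by
    intro R i0 h0R h0A huniq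
    by_cases hI : i0 ∈ I
    · rw [if_pos hI]
      rw [Finset.sum_eq_single_of_mem i0 (Finset.mem_inter.mpr ⟨h0R, hI⟩)]
      · exact h0A
      · intro i hiRI hne
        rcases hA01 i j with h | h
        · exact h
        · exact absurd (huniq i (Finset.mem_inter.mp hiRI).1 h) hne
    · rw [if_neg hI]
      apply Finset.sum_eq_zero
      intro i hiRI
      rcases hA01 i j with h | h
      · exact h
      · exact absurd (huniq i (Finset.mem_inter.mp hiRI).1 h ▸
          (Finset.mem_inter.mp hiRI).2) hI
  -- the H-sums
  have sumH : ∀ (R : Finset (Fin m1)) (i0 : Fin m1),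
      (∀ l, l ∈ L → H l j ≠ 0 → ∀ i, i ∈ R → {x | H l x ≠ 0} ⊆ {x | A i x ≠ 0} → i = i0) →
      (∑ l ∈ LofR A H L R, H l j) =
        if i0 ∈ R ∧ ∃ l ∈ L, H l j ≠ 0 ∧ {x | H l x ≠ 0} ⊆ {x | A i0 x ≠ 0}
        then 1 else 0 := by
    intro R i0 huniq
    have hstep : (∑ l ∈ LofR A H L R, H l j) =
        (((LofR A H L R).filter (fun l => H l j ≠ 0)).card : ℤ) := by
      rw [← Finset.sum_filter_ne_zero (LofR A H L R)]
      rw [Finset.card_eq_sum_ones]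
      push_cast
      refine Finset.sum_congr rfl fun l hl => ?_
      rcases hH01 l j with h | h
      · exact absurd h (Finset.mem_filter.mp hl).2
      · exact h
    by_cases hc : i0 ∈ R ∧ ∃ l ∈ L, H l j ≠ 0 ∧ {x | H l x ≠ 0} ⊆ {x | A i0 x ≠ 0}
    · obtain ⟨hi0R, l0, hl0L, hl0j, hl0s⟩ := hc
      have hset : (LofR A H L R).filter (fun l => H l j ≠ 0) = {l0} := by
        ext l
        simp only [LofR, Finset.mem_filter, Finset.mem_singleton]
        constructor
        · rintro ⟨⟨hlL, i, hiR, hsub⟩, hlj⟩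
          have hieq : i = i0 := huniq l hlL hlj i hiR hsub
          subst hieq
          by_contra hne
          have hd := hii l l0 hne ⟨i, Set.union_subset hsub hl0s⟩
          have : j ∈ {x | H l x ≠ 0} ∩ {x | H l0 x ≠ 0} := ⟨hlj, hl0j⟩
          rw [hd] at this
          exact this
        · rintro rfl
          exact ⟨⟨hl0L, i0, hi0R, hl0s⟩, hl0j⟩
      rw [if_pos ⟨hi0R, l0, hl0L, hl0j, hl0s⟩, hstep, hset]
      simp
    · have hset : (LofR A H L R).filter (fun l => H l j ≠ 0) = ∅ := by
        apply Finset.eq_empty_of_forall_notMem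
        intro l hl
        simp only [LofR, Finset.mem_filter] at hl
        obtain ⟨⟨hlL, i, hiR, hsub⟩, hlj⟩ := hl
        have hieq : i = i0 := huniq l hlL hlj i hiR hsub
        exact hc ⟨hieq ▸ hiR, l, hlL, hlj, hieq ▸ hsub⟩
      rw [if_neg hc, hstep, hset]
      simp
    -- uniqueness helpers
  have w1 : ∀ l, l ∈ L → H l j ≠ 0 → ∀ i, i ∈ R1 →
      {x | H l x ≠ 0} ⊆ {x | A i x ≠ 0} → i = i1 := by
    intro l _ hlj i hiR hsub
    have hAij : A i j ≠ 0 := hsub hlj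
    rcases hA01 i j with h | h
    · exact absurd h hAij
    · exact hi1u i ⟨hiR, h⟩
  have w2 : ∀ l, l ∈ L → H l j ≠ 0 → ∀ i, i ∈ R2 →
      {x | H l x ≠ 0} ⊆ {x | A i x ≠ 0} → i = i2 := by
    intro l _ hlj i hiR hsub
    have hAij : A i j ≠ 0 := hsub hlj
    rcases hA01 i j with h | h
    · exact absurd h hAij
    · exact hi2u i ⟨hiR, h⟩
  rw [sumA R1 i1 hi1R hi1A (fun i h h' => hi1u i ⟨h, h'⟩),
      sumA R2 i2 hi2R hi2A (fun i h h' => hi2u i ⟨h, h'⟩),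
      sumH (R1 \ I) i1 (fun l hl hj i hi hs => w1 l hl hj i (Finset.mem_sdiff.mp hi).1 hs),
      sumH (R1 ∩ I) i1 (fun l hl hj i hi hs => w1 l hl hj i (Finset.mem_inter.mp hi).1 hs),
      sumH (R2 \ I) i2 (fun l hl hj i hi hs => w2 l hl hj i (Finset.mem_sdiff.mp hi).1 hs),
      sumH (R2 ∩ I) i2 (fun l hl hj i hi hs => w2 l hl hj i (Finset.mem_inter.mp hi).1 hs)]
  clear sumA sumH w1 w2 hi hii hsupp2 hsimple hA01 hH01 hbip2 hi1u hi2u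
    hi1A hi2A hdisj hcover
  simp only [Set.mem_insert_iff, Set.mem_singleton_iff]
  split_ifs <;>
    first
      | omega
      | (exfalso; simp_all [Finset.mem_sdiff, Finset.mem_inter])
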